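/- Let (Jₜ) be a pure-jump process whose sum of squared jumps Σ_{s≤t}(ΔJ_s)² is finite a.s. Suppose that along a subsequence n_k with h_k = T/n_k, almost surely Σ_{j≤⌊t/h_k⌋}(Δ_j J)² → Σ_{s∈[0,t]}(ΔJ_s)² uniformly in t ∈ [0,T]. Then almost surely: for every δ > 0 there exists k₀ such that for all k ≥ k₀ and all j = 1,…,n_k, if (Δ_j J)² ≤ 4 r(h_k) then every individual jump in (t_{j−1}, t_j] satisfies (ΔJ_s)² ≤ 4 r(h_k) + δ. -/

import Mathlib

open Filter Topology MeasureTheory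

/-- Lemma 10, part 1: if a.s., along the subsequence `n_k` (with `h_k = T/n_k`), the
discretized sum of squared increments of the pure-jump process `J` converges uniformly
on `[0,T]` to the cumulative sum of squared jumps `Q`, then a.s. for every `δ > 0` and
all sufficiently large `k`: whenever `(Δ_j J)² ≤ 4·r(h_k)`, every individual jump in
`(t_{j−1}, t_j]` satisfies `(ΔJ_s)² ≤ 4·r(h_k) + δ`. -/
theorem small_increment_controls_individual_jumps
    {Ω : Type*} [MeasurableSpace Ω] (P : Measure Ω) [IsProbabilityMeasure P]
    (T : ℝ) (hT : 0 < T)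
    (J : Ω → ℝ → ℝ) (jump : Ω → ℝ → ℝ) (Q : Ω → ℝ → ℝ) (r : ℝ → ℝ)
    (hQfin : ∀ᵐ ω ∂P, ∀ t ∈ Set.Icc (0:ℝ) T, 0 ≤ Q ω t)
    (hQjump : ∀ ω, ∀ u v s : ℝ, 0 ≤ u → v ≤ T → u < s → s ≤ v →
      (jump ω s) ^ 2 ≤ Q ω v - Q ω u)
    (nk : ℕ → ℕ) (hnk : StrictMono nk) (hnk1 : ∀ k, 0 < nk k)
    (hconv : ∀ᵐ ω ∂P, TendstoUniformlyOn
      (fun k t => ∑ j ∈ Finset.range ⌊t / (T / nk k)⌋₊,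
        (J ω (((j : ℝ) + 1) * (T / nk k)) - J ω ((j : ℝ) * (T / nk k))) ^ 2)
      (fun t => Q ω t) atTop (Set.Icc 0 T)) :
    ∀ᵐ ω ∂P, ∀ δ > (0:ℝ), ∃ k₀ : ℕ, ∀ k ≥ k₀, ∀ j : ℕ, 1 ≤ j → j ≤ nk k →
      (J ω ((j : ℝ) * (T / nk k)) - J ω (((j : ℝ) - 1) * (T / nk k))) ^ 2
          ≤ 4 * r (T / nk k) →
      ∀ s : ℝ, ((j : ℝ) - 1) * (T / nk k) < s → s ≤ (j : ℝ) * (T / nk k) →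
        (jump ω s) ^ 2 ≤ 4 * r (T / nk k) + δ := by
  filter_upwards [hconv] with ω hc
  intro δ hδ
  rw [Metric.tendstoUniformlyOn_iff] at hc
  obtain ⟨k₀, hk₀⟩ := eventually_atTop.mp (hc (δ/2) (by linarith))
  refine ⟨k₀, fun k hk j hj1 hj2 hsmall s hs1 hs2 => ?_⟩
  obtain ⟨m, rfl⟩ : ∃ m, j = m + 1 := ⟨j - 1, (Nat.succ_pred_eq_of_pos hj1).symm⟩
  set h := T / nk k with hh
  have hnpos : (0:ℝ) < nk k := Nat.cast_pos.mpr (hnk1 k)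
  have hpos : 0 < h := div_pos hT hnpos
  have hT' : (nk k : ℝ) * h = T := by rw [hh]; field_simp [hnpos.ne']
  have hjle : ((m+1:ℕ) : ℝ) ≤ nk k := Nat.cast_le.mpr hj2
  have hmle : (m:ℝ) ≤ nk k := le_trans (by push_cast; linarith) hjle
  have hmem1 : ((m:ℝ)) * h ∈ Set.Icc (0:ℝ) T := by
    constructor
    · positivity
    · nlinarith
  have hmem2 : (((m:ℝ))+1) * h ∈ Set.Icc (0:ℝ) T := by
    constructor
    · positivity
    · push_cast at hjle; nlinarith
  have hfloor1 : ⌊((m:ℝ))*h / h⌋₊ = m := by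
    rw [mul_div_cancel_right₀ _ hpos.ne', Nat.floor_natCast]
  have hfloor2 : ⌊(((m:ℝ))+1)*h / h⌋₊ = m + 1 := by
    rw [mul_div_cancel_right₀ _ hpos.ne',
      show ((m:ℝ)+1) = ((m+1:ℕ):ℝ) by push_cast; ring, Nat.floor_natCast]
  have h1 := hk₀ k hk ((m:ℝ)*h) hmem1
  have h2 := hk₀ k hk (((m:ℝ)+1)*h) hmem2
  rw [← hh] at h1 h2
  simp only [hfloor1, hfloor2, Real.dist_eq, Finset.sum_range_succ] at h1 h2
  rw [abs_lt] at h1 h2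
  have key := hQjump ω ((m:ℝ)*h) (((m:ℝ)+1)*h) s (by positivity) hmem2.2
    (by push_cast at hs1 ⊢; linarith) (by push_cast at hs2 ⊢; linarith)
  have hsmall' : (J ω (((m:ℝ)+1) * h) - J ω ((m:ℝ) * h)) ^ 2 ≤ 4 * r h := by
    push_cast at hsmall; convert hsmall using 3 <;> ring
  linarith [h1.1, h1.2, h2.1, h2.2]
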